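/- Let f^p be a generalized median voter scheme. For any agent i: (i) if p_{N\{i}} ≤ p_{{i}}, then x ∈ V_i if and only if x < p_{N\{i}} or x > p_{{i}}; (ii) if p_{{i}} < p_{N\{i}}, then V_i = X. -/
import Mathlib


/-- A preference profile: each agent `i : Fin n` has a strict preference,
modeled as a linear order on the set of alternatives `X`. -/
abbrev Profile (n : ℕ) (X : Type*) := Fin n → LinearOrder X

/-- The top (best) alternative of a preference `L`. -/
noncomputable def top {X : Type*} [Fintype X] [Nonempty X] (L : LinearOrder X) : X :=
  @Finset.max' X L Finset.univ Finset.univ_nonempty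

/-- `x` is strictly preferred to `y` according to `L`. -/
def prefers {X : Type*} (L : LinearOrder X) (x y : X) : Prop := L.lt y x

/-- The option set left open by preference `L` of agent `i` at rule `f`. -/
def OptionSet {n : ℕ} {X : Type*} (f : Profile n X → X) (i : Fin n) (L : LinearOrder X) :
    Set X :=
  {x | ∃ P : Profile n X, P i = L ∧ f P = x}

/-- `Li'` is a profitable manipulation of `f` at (true preference) `Li` for agent `i`. -/
def IsManip {n : ℕ} {X : Type*} (f : Profile n X → X) (i : Fin n)
    (Li Li' : LinearOrder X) : Prop :=
  ∃ P : Profile n X, P i = Li ∧ prefers Li (f (Function.update P i Li')) (f P)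

/-- The worst element of `O(Li')` is strictly `Li`-preferred to the worst element of `O(Li)`.
For nonempty finite option sets this is equivalent to: some element of `O(Li)` is strictly
worse (w.r.t. `Li`) than every element of `O(Li')`. -/
def WorstImproves {n : ℕ} {X : Type*} (f : Profile n X → X) (i : Fin n)
    (Li Li' : LinearOrder X) : Prop :=
  ∃ w ∈ OptionSet f i Li, ∀ w' ∈ OptionSet f i Li', prefers Li w' w

/-- The best element of `O(Li')` is strictly `Li`-preferred to the best element of `O(Li)`.
For nonempty finite option sets this is equivalent to: some element of `O(Li')` is strictly
better (w.r.t. `Li`) than every element of `O(Li)`. -/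
def BestImproves {n : ℕ} {X : Type*} (f : Profile n X → X) (i : Fin n)
    (Li Li' : LinearOrder X) : Prop :=
  ∃ b' ∈ OptionSet f i Li', ∀ b ∈ OptionSet f i Li, prefers Li b' b

/-- `Li'` is an obvious manipulation of `f` at `Li` for agent `i`. -/
def IsObviousManip {n : ℕ} {X : Type*} (f : Profile n X → X) (i : Fin n)
    (Li Li' : LinearOrder X) : Prop :=
  IsManip f i Li Li' ∧ (WorstImproves f i Li Li' ∨ BestImproves f i Li Li')

/-- `f` is not obviously manipulable. -/
def NOM {n : ℕ} {X : Type*} (f : Profile n X → X) : Prop :=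
  ∀ (i : Fin n) (Li Li' : LinearOrder X), ¬ IsObviousManip f i Li Li'

/-- `f` is tops-only. -/
def TopsOnly {n : ℕ} {X : Type*} [Fintype X] [Nonempty X] (f : Profile n X → X) : Prop :=
  ∀ P P' : Profile n X, (∀ i, top (P i) = top (P' i)) → f P = f P'

/-- The set `V_i` of alternatives that agent `i` vetoes via some preference. -/
def VetoSet {n : ℕ} {X : Type*} (f : Profile n X → X) (i : Fin n) : Set X :=
  {x | ∃ L : LinearOrder X, x ∉ OptionSet f i L}

/-- The set `SV_i` of alternatives strongly vetoed by agent `i`: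
`x` is vetoed via `L` precisely when the top of `L` differs from `x`. -/
def StrongVetoSet {n : ℕ} {X : Type*} [Fintype X] [Nonempty X]
    (f : Profile n X → X) (i : Fin n) : Set X :=
  {x | ∀ L : LinearOrder X, x ∉ OptionSet f i L ↔ top L ≠ x}

/-- `f` is dictatorial: some agent's top alternative is always selected. -/
def Dictatorial {n : ℕ} {X : Type*} [Fintype X] [Nonempty X]
    (f : Profile n X → X) : Prop :=
  ∃ i : Fin n, ∀ P : Profile n X, f P = top (P i)

/-- The ordered set of alternatives `X = {a, a+1, ..., b} ⊆ ℕ`. -/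
abbrev Alt (a b : ℕ) : Type := {x : ℕ // x ∈ Finset.Icc a b}

/-- `p` is a monotonic family of fixed ballots: `p_N = a`, `p_∅ = b`, and
`S ⊆ T` implies `p_T ≤ p_S`. -/
def MonotonicFamily {n a b : ℕ} (p : Finset (Fin n) → Alt a b) : Prop :=
  (p Finset.univ).val = a ∧ (p ∅).val = b ∧
    ∀ S T : Finset (Fin n), S ⊆ T → p T ≤ p S

/-- The generalized median voter scheme associated with the family `p`:
`f^p(P) = min_{S ⊆ N} max_{j ∈ S} {t(P_j), p_S}`. -/
noncomputable def gms {n a b : ℕ} [Nonempty (Alt a b)]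
    (p : Finset (Fin n) → Alt a b) (P : Profile n (Alt a b)) : Alt a b :=
  Finset.univ.inf' ⟨∅, Finset.mem_univ _⟩ fun S : Finset (Fin n) =>
    (insert (p S) (S.image fun j => top (P j))).max' (Finset.insert_nonempty _ _)


noncomputable def ordTop {a b : ℕ} (t : Alt a b) : LinearOrder (Alt a b) :=
  LinearOrder.lift' (fun x => if x = t then b + 1 else x.val)
    (by
      intro x y h
      have hx := Finset.mem_Icc.mp x.2
      have hy := Finset.mem_Icc.mp y.2
      simp only at h
      split_ifs at h with h1 h2 h2
      · rw [h1, h2]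
      · omega
      · omega
      · exact Subtype.ext h)

lemma top_eq_of_forall_le {X : Type*} [Fintype X] [Nonempty X] (L : LinearOrder X) (t : X)
    (h : ∀ x, L.le x t) : top L = t := by
  letI := L
  exact le_antisymm (Finset.max'_le _ _ _ fun x _ => h x)
    (Finset.le_max' _ _ (Finset.mem_univ t))

lemma top_ordTop {a b : ℕ} [Nonempty (Alt a b)] (t : Alt a b) : top (ordTop t) = t := by
  apply top_eq_of_forall_le
  intro x
  show (if x = t then b + 1 else x.val) ≤ (if t = t then b + 1 else t.val)
  have hx := Finset.mem_Icc.mp x.2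
  rw [if_pos rfl]
  split_ifs <;> omega

lemma gms_bounds {n a b : ℕ} [Nonempty (Alt a b)]
    (p : Finset (Fin n) → Alt a b) (hp : MonotonicFamily p) (i : Fin n)
    (P : Profile n (Alt a b)) :
    (top (P i) ≤ gms p P ∨ p (Finset.univ.erase i) ≤ gms p P) ∧
      (gms p P ≤ top (P i) ∨ gms p P ≤ p {i}) := by
  have hsub : ∀ S : Finset (Fin n), i ∉ S →
      p (Finset.univ.erase i) ≤ p S := by
    intro S hi
    refine hp.2.2 S (Finset.univ.erase i) ?_
    intro j hj
    exact Finset.mem_erase.mpr ⟨fun h => hi (h ▸ hj), Finset.mem_univ j⟩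
  constructor
  · rcases le_total (top (P i)) (p (Finset.univ.erase i)) with hte | hte
    · left
      apply Finset.le_inf'
      intro S _
      by_cases hi : i ∈ S
      · refine Finset.le_max' _ _ ?_
        exact Finset.mem_insert_of_mem (Finset.mem_image.mpr ⟨i, hi, rfl⟩)
      · refine le_trans hte (le_trans (hsub S hi) ?_)
        exact Finset.le_max' _ _ (Finset.mem_insert_self _ _)
    · right
      apply Finset.le_inf'
      intro S _
      by_cases hi : i ∈ S
      · refine le_trans hte ?_
        refine Finset.le_max' _ _ ?_
        exact Finset.mem_insert_of_mem (Finset.mem_image.mpr ⟨i, hi, rfl⟩)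
      · refine le_trans (hsub S hi) ?_
        exact Finset.le_max' _ _ (Finset.mem_insert_self _ _)
  · have key : ∀ z : Alt a b, top (P i) ≤ z → p {i} ≤ z → gms p P ≤ z := by
      intro z h1 h2
      refine le_trans (Finset.inf'_le _ (Finset.mem_univ ({i} : Finset (Fin n)))) ?_
      apply Finset.max'_le
      intro y hy
      rw [Finset.image_singleton] at hy
      rcases Finset.mem_insert.mp hy with h | h
      · exact h ▸ h2
      · rw [Finset.mem_singleton] at h
        exact h ▸ h1
    rcases le_total (top (P i)) (p {i}) with h | h
    · exact Or.inr (key _ h le_rfl)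
    · exact Or.inl (key _ le_rfl h)

lemma gms_eq {n a b : ℕ} [Nonempty (Alt a b)]
    (p : Finset (Fin n) → Alt a b) (hp : MonotonicFamily p) (i : Fin n)
    (P : Profile n (Alt a b)) (y : Alt a b)
    (htop : ∀ j, j ≠ i → top (P j) = y)
    (h1v : (top (P i)).val ≤ y.val ∨ (p (Finset.univ.erase i)).val ≤ y.val)
    (h2v : y.val ≤ (top (P i)).val ∨ y.val ≤ (p {i}).val) :
    gms p P = y := by
  have h1 : top (P i) ≤ y ∨ p (Finset.univ.erase i) ≤ y := h1v
  have h2 : y ≤ top (P i) ∨ y ≤ p {i} := h2v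
  refine le_antisymm ?_ ?_
  · rcases h1 with hty | hpy
    · refine le_trans (Finset.inf'_le _ (Finset.mem_univ (Finset.univ : Finset (Fin n)))) ?_
      apply Finset.max'_le
      intro z hz
      rcases Finset.mem_insert.mp hz with h | h
      · subst h
        have hy := Finset.mem_Icc.mp y.2
        have ha : (p Finset.univ).val = a := hp.1
        show (p Finset.univ).val ≤ y.val
        omega
      · obtain ⟨j, -, rfl⟩ := Finset.mem_image.mp h
        by_cases hj : j = i
        · rw [hj]; exact hty
        · rw [htop j hj]
    · refine le_trans (Finset.inf'_le _ (Finset.mem_univ (Finset.univ.erase i))) ?_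
      apply Finset.max'_le
      intro z hz
      rcases Finset.mem_insert.mp hz with h | h
      · exact h ▸ hpy
      · obtain ⟨j, hjm, rfl⟩ := Finset.mem_image.mp h
        rw [htop j (Finset.mem_erase.mp hjm).1]
  · apply Finset.le_inf'
    intro S _
    by_cases hex : ∃ j ∈ S, j ≠ i
    · obtain ⟨j, hjS, hji⟩ := hex
      refine Finset.le_max' _ _ ?_
      exact Finset.mem_insert_of_mem (Finset.mem_image.mpr ⟨j, hjS, htop j hji⟩)
    · push_neg at hex
      have hSsub : S ⊆ {i} := fun j hj => Finset.mem_singleton.mpr (hex j hj)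
      rcases Finset.subset_singleton_iff.mp hSsub with rfl | rfl
      · refine le_trans ?_ (Finset.le_max' _ _ (Finset.mem_insert_self _ _))
        have hy := Finset.mem_Icc.mp y.2
        have hb : (p (∅ : Finset (Fin n))).val = b := hp.2.1
        show y.val ≤ (p (∅ : Finset (Fin n))).val
        omega
      · rcases h2 with h | h
        · refine le_trans h (Finset.le_max' _ _ (Finset.mem_insert_of_mem ?_))
          exact Finset.mem_image.mpr ⟨i, Finset.mem_singleton_self i, rfl⟩
        · exact le_trans h (Finset.le_max' _ _ (Finset.mem_insert_self _ _))

lemma gms_achieve {n a b : ℕ} [Nonempty (Alt a b)]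
    (p : Finset (Fin n) → Alt a b) (hp : MonotonicFamily p) (i : Fin n)
    (L : LinearOrder (Alt a b)) (y : Alt a b)
    (h1 : (top L).val ≤ y.val ∨ (p (Finset.univ.erase i)).val ≤ y.val)
    (h2 : y.val ≤ (top L).val ∨ y.val ≤ (p {i}).val) :
    y ∈ OptionSet (gms p) i L := by
  refine ⟨Function.update (fun _ => ordTop y) i L, ?_, ?_⟩
  · simp only [Function.update_self]
  apply gms_eq p hp i _ y
  · intro j hj
    rw [Function.update_of_ne hj]
    exact top_ordTop y
  · simp only [Function.update_self]
    exact h1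
  · simp only [Function.update_self]
    exact h2

lemma mem_vetoSet_gms {n a b : ℕ} [Nonempty (Alt a b)]
    (p : Finset (Fin n) → Alt a b) (hp : MonotonicFamily p) (i : Fin n) (x : Alt a b) :
    x ∈ VetoSet (gms p) i ↔
      x < p (Finset.univ.erase i) ∨ p {i} < x := by
  constructor
  · intro hveto
    by_contra hc
    push_neg at hc
    have hc1 : (p (Finset.univ.erase i)).val ≤ x.val := hc.1
    have hc2 : x.val ≤ (p {i}).val := hc.2
    obtain ⟨L, hL⟩ := hveto
    exact hL (gms_achieve p hp i L x (Or.inr hc1) (Or.inr hc2))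
  · rintro (h | h)
    · refine ⟨ordTop (p (Finset.univ.erase i)), ?_⟩
      rintro ⟨P, hPi, hfP⟩
      have hb := (gms_bounds p hp i P).1
      rw [hPi, top_ordTop, or_self, hfP] at hb
      exact absurd hb (not_le.mpr h)
    · refine ⟨ordTop (p {i}), ?_⟩
      rintro ⟨P, hPi, hfP⟩
      have hb := (gms_bounds p hp i P).2
      rw [hPi, top_ordTop, or_self, hfP] at hb
      exact absurd hb (not_le.mpr h)

/-- Veto sets of a generalized median voter scheme: (i) if `p_{N\{i}} ≤ p_{{i}}` then
`x ∈ V_i` iff `x < p_{N\{i}}` or `x > p_{{i}}`; (ii) if `p_{{i}} < p_{N\{i}}` then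
`V_i = X`. -/
theorem gms_vetoSet {n a b : ℕ} [Nonempty (Alt a b)]
    (hn : 2 ≤ n) (hab : a ≤ b)
    (p : Finset (Fin n) → Alt a b) (hp : MonotonicFamily p) (i : Fin n) :
    (p (Finset.univ.erase i) ≤ p {i} →
      ∀ x : Alt a b, x ∈ VetoSet (gms p) i ↔
        x < p (Finset.univ.erase i) ∨ p {i} < x) ∧
    (p {i} < p (Finset.univ.erase i) →
      VetoSet (gms p) i = Set.univ) := by
  constructor
  · intro _ x
    exact mem_vetoSet_gms p hp i x
  · intro h
    apply Set.eq_univ_iff_forall.mpr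
    intro x
    rw [mem_vetoSet_gms p hp i x]
    rcases lt_or_ge x (p (Finset.univ.erase i)) with h' | h'
    · exact Or.inl h'
    · exact Or.inr (lt_of_lt_of_le h h')
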